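/- Let N ≥ 1, s ∈ (0,1), p > 1 with N > sp, and let p*_s = Np/(N - sp). There exists C > 0 such that for every r > 0, every K > 4, and every u ∈ L^{p*_s}(ℝᴺ): ∫_{ℝᴺ \ B_{Kr}(0)} ∫_{{y ∈ B_{2r}(0) : |x-y| > r}} |u(x)|^p / |x-y|^{N+sp} dy dx ≤ C K^{-N} ( ∫_{ℝᴺ \ B_{Kr}(0)} |u(x)|^{p*_s} dx )^{p/p*_s}. -/

import Mathlib

open Real MeasureTheory Metric
open scoped ENNReal

lemma tail_int (N : ℕ) (hN : 1 ≤ N) {c R : ℝ} (hc : (N : ℝ) < c) (hR : 0 < R) :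
    ∫ x in (ball (0 : EuclideanSpace ℝ (Fin N)) R)ᶜ, ‖x‖ ^ (-c)
      = ((N : ℝ) * (volume (ball (0 : EuclideanSpace ℝ (Fin N)) 1)).toReal / (c - N))
          * R ^ ((N : ℝ) - c) := by
  haveI : Nontrivial (EuclideanSpace ℝ (Fin N)) :=
    Module.nontrivial_of_finrank_pos (R := ℝ)
      (by rw [finrank_euclideanSpace, Fintype.card_fin]; omega)
  have hdim : Module.finrank ℝ (EuclideanSpace ℝ (Fin N)) = N := by
    rw [finrank_euclideanSpace, Fintype.card_fin]
  have h1 : ∫ x in (ball (0 : EuclideanSpace ℝ (Fin N)) R)ᶜ, ‖x‖ ^ (-c)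
      = ∫ x : EuclideanSpace ℝ (Fin N),
          Set.indicator (Set.Ici R) (fun t => t ^ (-c)) ‖x‖ := by
    rw [← integral_indicator measurableSet_ball.compl]
    congr 1 with x
    have hmem : x ∈ (ball (0 : EuclideanSpace ℝ (Fin N)) R)ᶜ ↔ ‖x‖ ∈ Set.Ici R := by
      simp [mem_ball, dist_zero_right, not_lt]
    by_cases hx : ‖x‖ ∈ Set.Ici R
    · rw [Set.indicator_of_mem (hmem.mpr hx), Set.indicator_of_mem hx]
    · rw [Set.indicator_of_notMem (fun h => hx (hmem.mp h)), Set.indicator_of_notMem hx]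
  rw [h1, integral_fun_norm_addHaar volume
    (Set.indicator (Set.Ici R) (fun t => t ^ (-c))), hdim]
  have h2 : ∫ y in Set.Ioi (0:ℝ),
        y ^ (N - 1) • Set.indicator (Set.Ici R) (fun t => t ^ (-c)) y
      = ∫ y in Set.Ioi R, y ^ ((N:ℝ) - 1 - c) := by
    rw [setIntegral_congr_fun measurableSet_Ioi
      (g := fun y => Set.indicator (Set.Ici R) (fun y => y ^ ((N:ℝ) - 1 - c)) y) ?_]
    · rw [setIntegral_indicator measurableSet_Ici]
      have hIR : Set.Ioi (0:ℝ) ∩ Set.Ici R = Set.Ici R :=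
        Set.inter_eq_right.mpr (fun y hy => lt_of_lt_of_le hR hy)
      rw [hIR, integral_Ici_eq_integral_Ioi]
    · intro y hy
      simp only [smul_eq_mul]
      by_cases hyR : y ∈ Set.Ici R
      · rw [Set.indicator_of_mem hyR, Set.indicator_of_mem hyR,
          ← Real.rpow_natCast y (N - 1), ← Real.rpow_add hy]
        congr 1
        rw [Nat.cast_sub hN]
        push_cast
        ring
      · rw [Set.indicator_of_notMem hyR, Set.indicator_of_notMem hyR, mul_zero]
  rw [h2, integral_Ioi_rpow_of_lt (by linarith) hR]
  have h3 : (N:ℝ) - 1 - c + 1 = (N:ℝ) - c := by ring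
  rw [h3, nsmul_eq_mul, smul_eq_mul]
  have h4 : (N:ℝ) - c ≠ 0 := by linarith
  have h5 : c - (N:ℝ) ≠ 0 := by linarith
  field_simp
  simp only [measureReal_def]
  ring

lemma tail_integrableOn (N : ℕ) {c R : ℝ} (hc : (N : ℝ) < c) (hR : 0 < R) :
    IntegrableOn (fun x : EuclideanSpace ℝ (Fin N) => ‖x‖ ^ (-c))
      (ball (0 : EuclideanSpace ℝ (Fin N)) R)ᶜ volume := by
  have hdim : (Module.finrank ℝ (EuclideanSpace ℝ (Fin N)) : ℝ) < c := by
    rwa [finrank_euclideanSpace, Fintype.card_fin]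
  have hc0 : (0:ℝ) < c := lt_of_le_of_lt (Nat.cast_nonneg N) hc
  have hint := (integrable_one_add_norm (μ := (volume : Measure (EuclideanSpace ℝ (Fin N))))
    hdim).restrict (s := (ball (0 : EuclideanSpace ℝ (Fin N)) R)ᶜ)
  refine (hint.const_mul ((1 + 1/R) ^ c)).mono' ?_ ?_
  · exact Measurable.aestronglyMeasurable (by fun_prop)
  · refine (ae_restrict_iff' measurableSet_ball.compl).2 (Filter.Eventually.of_forall fun x hx => ?_)
    have hxR : R ≤ ‖x‖ := by
      simpa [mem_ball, dist_zero_right, not_lt] using hx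
    have hx0 : (0:ℝ) < ‖x‖ := lt_of_lt_of_le hR hxR
    rw [Real.norm_eq_abs, abs_of_nonneg (Real.rpow_nonneg (norm_nonneg _) _)]
    have hb : (0:ℝ) < 1 + 1/R := by positivity
    have key : (1 + ‖x‖) / (1 + 1/R) ≤ ‖x‖ := by
      rw [div_le_iff₀ hb]
      have h1 : 1 ≤ ‖x‖ / R := (one_le_div hR).2 hxR
      have h2 : ‖x‖ * (1/R) = ‖x‖ / R := by ring
      nlinarith [hx0]
    have hpos : (0:ℝ) < (1 + ‖x‖) / (1 + 1/R) := by positivity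
    calc ‖x‖ ^ (-c) ≤ ((1 + ‖x‖) / (1 + 1/R)) ^ (-c) :=
          Real.rpow_le_rpow_of_nonpos hpos key (by linarith)
      _ = (1 + 1/R) ^ c * (1 + ‖x‖) ^ (-c) := by
          rw [Real.rpow_neg hpos.le, Real.div_rpow (by positivity) hb.le,
            Real.rpow_neg (by positivity), inv_div, div_eq_mul_inv]

set_option maxHeartbeats 1000000 in
theorem stmt9 (N : ℕ) (hN : 1 ≤ N) (s p : ℝ) (hs : s ∈ Set.Ioo (0:ℝ) 1)
    (hp : 1 < p) (hNsp : s * p < N) :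
    ∃ C > (0 : ℝ), ∀ r > (0 : ℝ), ∀ K > (4 : ℝ),
      ∀ u : EuclideanSpace ℝ (Fin N) → ℝ,
      MemLp u (ENNReal.ofReal (N * p / (N - s * p))) volume →
      (∫ x in (ball (0 : EuclideanSpace ℝ (Fin N)) (K * r))ᶜ,
          ∫ y in {y | y ∈ ball (0 : EuclideanSpace ℝ (Fin N)) (2 * r) ∧ r < dist x y},
            |u x| ^ p / dist x y ^ ((N : ℝ) + s * p)) ≤
        C * K ^ (-(N : ℝ)) *
          (∫ x in (ball (0 : EuclideanSpace ℝ (Fin N)) (K * r))ᶜ,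
              |u x| ^ (N * p / (N - s * p))) ^ (p / (N * p / (N - s * p))) := by
  obtain ⟨hs0, hs1⟩ := hs
  haveI : Nontrivial (EuclideanSpace ℝ (Fin N)) :=
    Module.nontrivial_of_finrank_pos (R := ℝ)
      (by rw [finrank_euclideanSpace, Fintype.card_fin]; omega)
  have hN1 : (1:ℝ) ≤ N := by exact_mod_cast hN
  have hN0 : (0:ℝ) < N := by linarith
  have hp0 : (0:ℝ) < p := lt_trans one_pos hp
  have hsp : 0 < s * p := mul_pos hs0 hp0
  have hNs : 0 < (N:ℝ) - s * p := sub_pos.mpr hNsp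
  set ps := (N:ℝ) * p / ((N:ℝ) - s * p) with hps_def
  have hps_pos : 0 < ps := by positivity
  set A := ps / p with hA_def
  have hA : A = (N:ℝ) / ((N:ℝ) - s * p) := by
    rw [hA_def, hps_def]
    field_simp
  have hA1 : 1 < A := by
    rw [hA, lt_div_iff₀ hNs]; linarith
  have hA0 : 0 < A := lt_trans one_pos hA1
  set B := (N:ℝ) / (s * p) with hB_def
  have hB0 : 0 < B := by positivity
  have hAB : A.HolderConjugate B := by
    rw [Real.holderConjugate_iff]
    constructor
    · exact hA1
    · rw [hA, hB_def, inv_div, inv_div, ← add_div]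
      field_simp
      ring
  set a := (N:ℝ) + s * p with ha_def
  have ha0 : 0 < a := by positivity
  set c := a * B with hc_def
  have hcN : (N:ℝ) < c := by
    have h1 : c = (N:ℝ) * (N:ℝ) / (s * p) + (N:ℝ) := by
      rw [hc_def, ha_def, hB_def]
      field_simp
    have h2 : 0 < (N:ℝ) * (N:ℝ) / (s * p) := by positivity
    linarith
  have hcN' : 0 < c - (N:ℝ) := sub_pos.mpr hcN
  set vN := (volume (ball (0 : EuclideanSpace ℝ (Fin N)) 1)).toReal with hvN_def
  have hvN : 0 < vN := ENNReal.toReal_pos (measure_ball_pos volume _ one_pos).ne'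
    measure_ball_lt_top.ne
  set T := (N:ℝ) * vN / (c - (N:ℝ)) with hT_def
  have hT : 0 < T := by positivity
  have hdim : (Module.finrank ℝ (EuclideanSpace ℝ (Fin N))) = N := by
    rw [finrank_euclideanSpace, Fintype.card_fin]
  clear_value ps A B a c vN T
  refine ⟨2 ^ a * 2 ^ (N:ℕ) * vN * T ^ (1/B),
    mul_pos (mul_pos (mul_pos (Real.rpow_pos_of_pos two_pos a) (pow_pos two_pos N)) hvN)
      (Real.rpow_pos_of_pos hT _), ?_⟩
  intro r hr K hK u hu
  have hK0 : (0:ℝ) < K := by linarith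
  have hKr : 0 < K * r := mul_pos hK0 hr
  set Ω := (ball (0 : EuclideanSpace ℝ (Fin N)) (K * r))ᶜ with hΩ_def
  have hΩm : MeasurableSet Ω := measurableSet_ball.compl
  set f := fun x : EuclideanSpace ℝ (Fin N) => |u x| ^ p with hf_def
  set g := fun x : EuclideanSpace ℝ (Fin N) => ‖x‖ ^ (-a) with hg_def
  have hxnorm : ∀ x ∈ Ω, K * r ≤ ‖x‖ := by
    intro x hx
    simpa [hΩ_def, mem_ball, dist_zero_right, not_lt] using hx
  have hgc : ∀ x : EuclideanSpace ℝ (Fin N), g x ^ B = ‖x‖ ^ (-c) := by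
    intro x
    rw [hc_def, ← neg_mul, Real.rpow_mul (norm_nonneg x)]
  -- MemLp facts
  have hgmeas : AEStronglyMeasurable g (volume.restrict Ω) :=
    Measurable.aestronglyMeasurable
      (show Measurable fun x : EuclideanSpace ℝ (Fin N) => ‖x‖ ^ (-a) by fun_prop)
  have hgint : Integrable (fun x : EuclideanSpace ℝ (Fin N) => ‖x‖ ^ (-c))
      (volume.restrict Ω) := by
    rw [hΩ_def]
    exact tail_integrableOn N hcN hKr
  have hgmem : MemLp g (ENNReal.ofReal B) (volume.restrict Ω) := by
    have hBne : ENNReal.ofReal B ≠ 0 := by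
      simp [ENNReal.ofReal_eq_zero, not_le, hB0]
    have hBnt : ENNReal.ofReal B ≠ ⊤ := ENNReal.ofReal_ne_top
    have h := memLp_norm_rpow_iff (p := ENNReal.ofReal B) hgmeas hBne hBnt
    rw [ENNReal.div_self hBne hBnt] at h
    apply h.mp
    rw [memLp_one_iff_integrable]
    have he : (fun x => ‖g x‖ ^ (ENNReal.ofReal B).toReal)
        = fun x : EuclideanSpace ℝ (Fin N) => ‖x‖ ^ (-c) := by
      funext x
      rw [ENNReal.toReal_ofReal hB0.le, Real.norm_eq_abs,
        abs_of_nonneg (Real.rpow_nonneg (norm_nonneg _) _), hgc x]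
    rw [he]
    exact hgint
  have hfmem : MemLp f (ENNReal.ofReal A) (volume.restrict Ω) := by
    have h := (hu.restrict Ω).norm_rpow_div (ENNReal.ofReal p)
    have h2 : ENNReal.ofReal ps / ENNReal.ofReal p = ENNReal.ofReal A := by
      rw [hA_def, ENNReal.ofReal_div_of_pos hp0]
    rw [h2] at h
    have h3 : (fun x => ‖u x‖ ^ (ENNReal.ofReal p).toReal) = f := by
      funext x
      rw [ENNReal.toReal_ofReal hp0.le, hf_def, Real.norm_eq_abs]
    rwa [h3] at h
  have h1 : (1 : ℝ≥0∞) / 1 = 1 / ENNReal.ofReal A + 1 / ENNReal.ofReal B := by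
    rw [one_div, one_div, one_div, inv_one, ← ENNReal.ofReal_inv_of_pos hA0,
      ← ENNReal.ofReal_inv_of_pos hB0,
      ← ENNReal.ofReal_add (inv_nonneg.mpr hA0.le) (inv_nonneg.mpr hB0.le),
      ← ENNReal.ofReal_one]
    congr 1
    have := hAB.inv_add_inv_eq_one
    linarith
  have hprod : Integrable (fun x => f x * g x) (volume.restrict Ω) := by
    have h2 := memLp_one_iff_integrable.mp (hgmem.smul hfmem (hpqr := ⟨by simpa [one_div] using h1.symm⟩))
    exact (by simpa [Pi.smul_apply', smul_eq_mul] using h2 : Integrable (f * g) (volume.restrict Ω))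
  -- pointwise bound on the inner integral
  have hinner : ∀ x ∈ Ω,
      (∫ y in {y | y ∈ ball (0 : EuclideanSpace ℝ (Fin N)) (2*r) ∧ r < dist x y},
        |u x| ^ p / dist x y ^ a)
      ≤ 2 ^ a * ((2*r) ^ (N:ℕ) * vN) * (f x * g x) := by
    intro x hx
    have hxK : K * r ≤ ‖x‖ := hxnorm x hx
    have hx4 : 4 * r < ‖x‖ := lt_of_lt_of_le (by nlinarith) hxK
    have hx0 : (0:ℝ) < ‖x‖ := by nlinarith
    set S := {y | y ∈ ball (0 : EuclideanSpace ℝ (Fin N)) (2*r) ∧ r < dist x y} with hS_def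
    have hSm : MeasurableSet S :=
      measurableSet_ball.inter
        (measurableSet_lt measurable_const
          ((continuous_const.dist continuous_id).measurable))
    have hSsub : S ⊆ ball (0 : EuclideanSpace ℝ (Fin N)) (2*r) := fun y hy => hy.1
    have hSfin : volume S < ⊤ := lt_of_le_of_lt (measure_mono hSsub) measure_ball_lt_top
    have hbound : ∀ y ∈ S, ‖|u x| ^ p / dist x y ^ a‖
        ≤ |u x| ^ p * (2 ^ a * ‖x‖ ^ (-a)) := by
      intro y hy
      obtain ⟨hy1, hy2⟩ := hy
      have hy2r : ‖y‖ < 2 * r := by simpa [mem_ball, dist_zero_right] using hy1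
      have hd : ‖x‖ / 2 ≤ dist x y := by
        have h1 : ‖x‖ ≤ dist x y + ‖y‖ := by
          have := dist_triangle x y 0
          simpa [dist_zero_right] using this
        linarith
      have hd0 : (0:ℝ) < ‖x‖ / 2 := by positivity
      rw [Real.norm_eq_abs, abs_of_nonneg
        (div_nonneg (Real.rpow_nonneg (abs_nonneg _) _) (Real.rpow_nonneg dist_nonneg _))]
      have h3 : |u x| ^ p / dist x y ^ a ≤ |u x| ^ p / (‖x‖/2) ^ a := by
        have hda : (‖x‖/2) ^ a ≤ dist x y ^ a := Real.rpow_le_rpow hd0.le hd ha0.le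
        have hda0 : (0:ℝ) < (‖x‖/2) ^ a := Real.rpow_pos_of_pos hd0 a
        gcongr
      refine h3.trans (le_of_eq ?_)
      have e1 : ‖x‖ ^ a ≠ 0 := (Real.rpow_pos_of_pos hx0 a).ne'
      have e2 : (2:ℝ) ^ a ≠ 0 := (Real.rpow_pos_of_pos two_pos a).ne'
      rw [Real.rpow_neg (norm_nonneg x), Real.div_rpow (norm_nonneg x) (by norm_num : (0:ℝ) ≤ 2)]
      field_simp
    calc (∫ y in S, |u x| ^ p / dist x y ^ a)
        ≤ ‖∫ y in S, |u x| ^ p / dist x y ^ a‖ := Real.le_norm_self _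
      _ ≤ (|u x| ^ p * (2 ^ a * ‖x‖ ^ (-a))) * (volume S).toReal :=
          norm_setIntegral_le_of_norm_le_const hSfin hbound
      _ ≤ (|u x| ^ p * (2 ^ a * ‖x‖ ^ (-a)))
            * (volume (ball (0 : EuclideanSpace ℝ (Fin N)) (2*r))).toReal := by
          have hmono : (volume S).toReal
              ≤ (volume (ball (0 : EuclideanSpace ℝ (Fin N)) (2*r))).toReal :=
            ENNReal.toReal_mono measure_ball_lt_top.ne (measure_mono hSsub)
          exact mul_le_mul_of_nonneg_left hmono (by positivity)
      _ = 2 ^ a * ((2*r) ^ (N:ℕ) * vN) * (f x * g x) := by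
          rw [Measure.addHaar_ball _ _ (by positivity : (0:ℝ) ≤ 2*r), ENNReal.toReal_mul,
            ENNReal.toReal_ofReal (by positivity), hdim]
          simp only [hf_def, hg_def, hvN_def]
          ring
  -- monotonicity step
  have hstep1 : (∫ x in Ω,
      ∫ y in {y | y ∈ ball (0 : EuclideanSpace ℝ (Fin N)) (2*r) ∧ r < dist x y},
        |u x| ^ p / dist x y ^ a)
      ≤ ∫ x in Ω, 2 ^ a * ((2*r) ^ (N:ℕ) * vN) * (f x * g x) := by
    refine integral_mono_of_nonneg ?_ (hprod.const_mul _) ?_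
    · exact Filter.Eventually.of_forall fun x => integral_nonneg fun y =>
        div_nonneg (Real.rpow_nonneg (abs_nonneg _) _) (Real.rpow_nonneg dist_nonneg _)
    · exact (ae_restrict_iff' hΩm).2 (Filter.Eventually.of_forall hinner)
  -- Hölder step
  have hstep2 : ∫ x in Ω, f x * g x
      ≤ (∫ x in Ω, f x ^ A) ^ (1/A) * (∫ x in Ω, g x ^ B) ^ (1/B) :=
    integral_mul_le_Lp_mul_Lq_of_nonneg hAB
      (Filter.Eventually.of_forall fun x => Real.rpow_nonneg (abs_nonneg _) _)
      (Filter.Eventually.of_forall fun x => Real.rpow_nonneg (norm_nonneg _) _)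
      hfmem hgmem
  have hfA : ∫ x in Ω, f x ^ A = ∫ x in Ω, |u x| ^ ps := by
    apply setIntegral_congr_fun hΩm
    intro x _
    show (|u x| ^ p) ^ A = |u x| ^ ps
    rw [← Real.rpow_mul (abs_nonneg _)]
    congr 1
    rw [hA_def]
    field_simp
  have hgB : ∫ x in Ω, g x ^ B = T * (K * r) ^ ((N:ℝ) - c) := by
    rw [setIntegral_congr_fun hΩm (fun x _ => hgc x), hΩ_def, tail_int N hN hcN hKr,
      hT_def, hvN_def]
  have hexp : 1/A = p / ps := by
    rw [hA_def, one_div, inv_div]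
  have hgB2 : (∫ x in Ω, g x ^ B) ^ (1/B)
      = T ^ (1/B) * (K ^ (-(N:ℝ)) * r ^ (-(N:ℝ))) := by
    rw [hgB, Real.mul_rpow hT.le (Real.rpow_nonneg hKr.le _), ← Real.rpow_mul hKr.le]
    have he : ((N:ℝ) - c) * (1/B) = -(N:ℝ) := by
      rw [hc_def, ha_def, hB_def]
      field_simp
      ring
    rw [he, Real.mul_rpow hK0.le hr.le]
  have hrr : r ^ ((N:ℕ):ℝ) * r ^ (-(N:ℝ)) = 1 := by
    rw [← Real.rpow_add hr]
    norm_num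
  calc (∫ x in Ω,
      ∫ y in {y | y ∈ ball (0 : EuclideanSpace ℝ (Fin N)) (2*r) ∧ r < dist x y},
        |u x| ^ p / dist x y ^ a)
      ≤ ∫ x in Ω, 2 ^ a * ((2*r) ^ (N:ℕ) * vN) * (f x * g x) := hstep1
    _ = 2 ^ a * ((2*r) ^ (N:ℕ) * vN) * ∫ x in Ω, f x * g x := integral_const_mul _ _
    _ ≤ 2 ^ a * ((2*r) ^ (N:ℕ) * vN)
          * ((∫ x in Ω, f x ^ A) ^ (1/A) * (∫ x in Ω, g x ^ B) ^ (1/B)) := by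
        have hc1 : (0:ℝ) ≤ 2 ^ a * ((2*r) ^ (N:ℕ) * vN) :=
          mul_nonneg (Real.rpow_nonneg (by norm_num) a)
            (mul_nonneg (pow_nonneg (by positivity) _) hvN.le)
        exact mul_le_mul_of_nonneg_left hstep2 hc1
    _ = 2 ^ a * 2 ^ (N:ℕ) * vN * T ^ (1/B) * K ^ (-(N:ℝ))
          * (∫ x in Ω, |u x| ^ ps) ^ (p / ps) := by
        rw [hfA, hgB2, hexp, mul_pow,
          show r ^ (N:ℕ) = r ^ ((N:ℕ):ℝ) from (Real.rpow_natCast r N).symm]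
        linear_combination (2:ℝ) ^ a * 2 ^ (N:ℕ) * vN * T ^ (1/B) * K ^ (-(N:ℝ))
          * (∫ x in Ω, |u x| ^ ps) ^ (p / ps) * hrr
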